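/- Main theorem (loss decrease across a prompt update): Let E be a real inner product space, L > 0, μ > 0 with μ ≤ 2L, M ∈ ℝ, and let F_old, F_new : E → ℝ with F_old differentiable, nonnegative, L-smooth, and satisfying the μ-PL* condition. Let x* ∈ E be a global minimizer of F_old with G_old = F_old(x*) ≥ 0, let y* ∈ E be a global minimizer of F_new with G_new = F_new(y*), and suppose F_old(x_0) ≤ M where (x_t) is the gradient-descent sequence x_{t+1} = x_t − (1/L)·∇F_old(x_t) started from x_0 ∈ E. Fix τ ∈ ℕ and α ∈ ℝ, and suppose the prompt-update decrease condition F_old(x_τ) − F_new(x_τ) ≥ α holds. Then G_old − G_new ≥ α − (1 − μ/(2L))^τ · M. -/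
import Mathlib


open RealInnerProductSpace

/-- Main theorem: loss decrease across a prompt update. If `G_old = F_old(x*) ≥ 0` is the
minimal loss of `F_old`, `G_new = F_new(y*)` is the minimal loss of `F_new`,
`F_old(x_0) ≤ M`, and the prompt update decreases the loss by at least `α` after `τ`
gradient-descent steps on `F_old`, then `G_old − G_new ≥ α − (1 − μ/(2L))^τ · M`. -/
theorem prompt_update_loss_decrease {E : Type*} [NormedAddCommGroup E]
    [InnerProductSpace ℝ E] [CompleteSpace E]
    (Fold Fnew : E → ℝ) (L μ M : ℝ) (hL : 0 < L) (hμ : 0 < μ) (hμL : μ ≤ 2 * L)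
    (hdiff : Differentiable ℝ Fold)
    (hnonneg : ∀ x, 0 ≤ Fold x)
    (hsmooth : ∀ x y : E,
      Fold y ≤ Fold x + ⟪gradient Fold x, y - x⟫ + L / 2 * ‖y - x‖ ^ 2)
    (hPL : ∀ x, μ * Fold x ≤ ‖gradient Fold x‖ ^ 2)
    (xstar : E) (hminOld : ∀ x, Fold xstar ≤ Fold x) (hGold : 0 ≤ Fold xstar)
    (ystar : E) (hminNew : ∀ x, Fnew ystar ≤ Fnew x)
    (x : ℕ → E) (hgd : ∀ t, x (t + 1) = x t - (1 / L) • gradient Fold (x t))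
    (hM : Fold (x 0) ≤ M)
    (τ : ℕ) (α : ℝ)
    (hdec : α ≤ Fold (x τ) - Fnew (x τ)) :
    α - (1 - μ / (2 * L)) ^ τ * M ≤ Fold xstar - Fnew ystar := by
  have hq0 : 0 ≤ 1 - μ / (2 * L) := by
    have : μ / (2 * L) ≤ 1 := (div_le_one (by linarith)).2 hμL
    linarith
  -- one-step contraction
  have hstep : ∀ t, Fold (x (t + 1)) ≤ (1 - μ / (2 * L)) * Fold (x t) := by
    intro t
    have hs := hsmooth (x t) (x (t + 1))
    set g := gradient Fold (x t) with hg
    have hdiffxy : x (t + 1) - x t = -((1 / L) • g) := by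
      rw [hgd t]; abel
    have hinner : ⟪g, x (t + 1) - x t⟫ = -(1 / L * ‖g‖ ^ 2) := by
      rw [hdiffxy, inner_neg_right, real_inner_smul_right, real_inner_self_eq_norm_sq]
    have hnormsq : ‖x (t + 1) - x t‖ ^ 2 = (1 / L) ^ 2 * ‖g‖ ^ 2 := by
      rw [hdiffxy, norm_neg, norm_smul, mul_pow]
      congr 1
      rw [Real.norm_eq_abs, sq_abs]
    rw [hinner, hnormsq] at hs
    have hdescent : Fold (x (t + 1)) ≤ Fold (x t) - 1 / (2 * L) * ‖g‖ ^ 2 := by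
      have : Fold (x t) + -(1 / L * ‖g‖ ^ 2) + L / 2 * ((1 / L) ^ 2 * ‖g‖ ^ 2)
          = Fold (x t) - 1 / (2 * L) * ‖g‖ ^ 2 := by
        field_simp; ring
      linarith [hs, this.symm ▸ hs]
    have hpl := hPL (x t)
    have h2L : (0:ℝ) < 1 / (2 * L) := by positivity
    have : 1 / (2 * L) * (μ * Fold (x t)) ≤ 1 / (2 * L) * ‖g‖ ^ 2 :=
      mul_le_mul_of_nonneg_left hpl (le_of_lt h2L)
    have heq : (1 - μ / (2 * L)) * Fold (x t)
        = Fold (x t) - 1 / (2 * L) * (μ * Fold (x t)) := by ring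
    linarith
  -- iterate
  have hiter : ∀ t, Fold (x t) ≤ (1 - μ / (2 * L)) ^ t * M := by
    intro t
    induction t with
    | zero => simpa using hM
    | succ n ih =>
      calc Fold (x (n + 1)) ≤ (1 - μ / (2 * L)) * Fold (x n) := hstep n
        _ ≤ (1 - μ / (2 * L)) * ((1 - μ / (2 * L)) ^ n * M) :=
            mul_le_mul_of_nonneg_left ih hq0
        _ = (1 - μ / (2 * L)) ^ (n + 1) * M := by ring
  have h1 := hiter τ
  have h2 := hminNew (x τ)
  linarith
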